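/- Let Σ = G ⊔ L be a nonempty alphabet and let (k⟨Σ⟩, conc, 1, Δ_{G,L}, ε) be the bialgebra with Δ(x) = x⊗x for x ∈ G, Δ(x) = x⊗1 + 1⊗x for x ∈ L, ε(x) = 1 for x ∈ G, ε(x) = 0 for x ∈ L. Then this bialgebra admits an antipode if and only if G = ∅. -/

import Mathlib

open TensorProduct

variable (k : Type*) [Field k] {X : Type*}

/-- The coproduct on the free algebra: `Δ(x) = x⊗x` for `x ∈ G`, `Δ(x) = x⊗1 + 1⊗x`
for `x ∉ G`. -/
noncomputable def freeCoproduct (G : Set X) [DecidablePred (· ∈ G)] :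
    FreeAlgebra k X →ₐ[k] FreeAlgebra k X ⊗[k] FreeAlgebra k X :=
  FreeAlgebra.lift k fun x =>
    if x ∈ G then FreeAlgebra.ι k x ⊗ₜ FreeAlgebra.ι k x
    else FreeAlgebra.ι k x ⊗ₜ 1 + 1 ⊗ₜ FreeAlgebra.ι k x

/-- The counit on the free algebra: `ε(x) = 1` for `x ∈ G`, `ε(x) = 0` for `x ∉ G`. -/
noncomputable def freeCounit (G : Set X) [DecidablePred (· ∈ G)] :
    FreeAlgebra k X →ₐ[k] k :=
  FreeAlgebra.lift k fun x => if x ∈ G then (1 : k) else 0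

/-- The candidate antipode as an algebra map to the opposite algebra:
`x ↦ -x` extended anti-multiplicatively. -/
noncomputable def freeAntipodeAux : FreeAlgebra k X →ₐ[k] (FreeAlgebra k X)ᵐᵒᵖ :=
  FreeAlgebra.lift k fun x => MulOpposite.op (-(FreeAlgebra.ι k x))

/-- The candidate antipode, as a linear map. -/
noncomputable def freeAntipode : FreeAlgebra k X →ₗ[k] FreeAlgebra k X :=
  (MulOpposite.opLinearEquiv k).symm.toLinearMap ∘ₗ (freeAntipodeAux k).toLinearMap

lemma freeAntipode_one : freeAntipode k (1 : FreeAlgebra k X) = 1 := by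
  simp [freeAntipode, freeAntipodeAux]

lemma freeAntipode_mul_ι (x : X) (g : FreeAlgebra k X) :
    freeAntipode k (FreeAlgebra.ι k x * g) = freeAntipode k g * (-(FreeAlgebra.ι k x)) := by
  simp [freeAntipode, freeAntipodeAux, MulOpposite.unop_mul]

lemma freeAntipode_ι_mul (x : X) (g : FreeAlgebra k X) :
    freeAntipode k (g * FreeAlgebra.ι k x) = -(FreeAlgebra.ι k x) * freeAntipode k g := by
  simp [freeAntipode, freeAntipodeAux, MulOpposite.unop_mul]

lemma rTensor_step (x : X) (t : FreeAlgebra k X ⊗[k] FreeAlgebra k X) :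
    LinearMap.mul' k (FreeAlgebra k X)
      ((freeAntipode k).rTensor (FreeAlgebra k X)
        ((FreeAlgebra.ι k x ⊗ₜ 1 + 1 ⊗ₜ FreeAlgebra.ι k x) * t)) = 0 := by
  induction t using TensorProduct.induction_on with
  | zero => simp
  | tmul a b =>
      simp only [Algebra.TensorProduct.tmul_mul_tmul, add_mul, one_mul, mul_one, map_add,
        LinearMap.rTensor_tmul, LinearMap.mul'_apply, freeAntipode_mul_ι]
      rw [mul_neg, neg_mul, mul_assoc, neg_add_cancel]
  | add u v hu hv =>
      rw [mul_add, map_add, map_add, hu, hv, add_zero]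

lemma lTensor_step (x : X) (t : FreeAlgebra k X ⊗[k] FreeAlgebra k X) :
    LinearMap.mul' k (FreeAlgebra k X)
      ((freeAntipode k).lTensor (FreeAlgebra k X)
        (t * (FreeAlgebra.ι k x ⊗ₜ 1 + 1 ⊗ₜ FreeAlgebra.ι k x))) = 0 := by
  induction t using TensorProduct.induction_on with
  | zero => simp
  | tmul a b =>
      simp only [Algebra.TensorProduct.tmul_mul_tmul, mul_add, one_mul, mul_one, map_add,
        LinearMap.lTensor_tmul, LinearMap.mul'_apply, freeAntipode_ι_mul]
      rw [neg_mul, mul_neg, ← mul_assoc, add_neg_cancel]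
  | add u v hu hv =>
      rw [add_mul, map_add, map_add, hu, hv, add_zero]

lemma basisFreeMonoid_eq (w : FreeMonoid X) :
    FreeAlgebra.basisFreeMonoid k X w = FreeMonoid.lift (FreeAlgebra.ι k) w := by
  classical
  simp only [FreeAlgebra.basisFreeMonoid, Module.Basis.map_apply, Finsupp.coe_basisSingleOne]
  show (FreeAlgebra.equivMonoidAlgebraFreeMonoid (R := k) (X := X)).symm
      (MonoidAlgebra.single w 1) = _
  rw [FreeAlgebra.equivMonoidAlgebraFreeMonoid]
  show (MonoidAlgebra.lift k (FreeAlgebra k X) (FreeMonoid X))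
      (FreeMonoid.lift (FreeAlgebra.ι k)) (MonoidAlgebra.single w 1) = _
  rw [MonoidAlgebra.lift_single, one_smul]

/-- for a nonempty alphabet `X = G ⊔ L`, the bialgebra
`(k⟨X⟩, conc, 1, Δ_{G,L}, ε)` admits an antipode iff `G = ∅`. -/
theorem freeBialgebra_antipode_iff (G : Set X) [DecidablePred (· ∈ G)] [Nonempty X] :
    (∃ S : FreeAlgebra k X →ₗ[k] FreeAlgebra k X,
      LinearMap.mul' k (FreeAlgebra k X) ∘ₗ S.rTensor (FreeAlgebra k X) ∘ₗ
          (freeCoproduct k G).toLinearMap =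
        Algebra.linearMap k (FreeAlgebra k X) ∘ₗ (freeCounit k G).toLinearMap ∧
      LinearMap.mul' k (FreeAlgebra k X) ∘ₗ S.lTensor (FreeAlgebra k X) ∘ₗ
          (freeCoproduct k G).toLinearMap =
        Algebra.linearMap k (FreeAlgebra k X) ∘ₗ (freeCounit k G).toLinearMap) ↔
    G = ∅ := by
  constructor
  · rintro ⟨S, h1, -⟩
    by_contra hG
    obtain ⟨x, hx⟩ := Set.nonempty_iff_ne_empty.mpr hG
    have := congrArg (fun f => f (FreeAlgebra.ι k x)) h1
    simp only [LinearMap.comp_apply, AlgHom.toLinearMap_apply, freeCoproduct, freeCounit,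
      FreeAlgebra.lift_ι_apply, if_pos hx, LinearMap.rTensor_tmul, LinearMap.mul'_apply,
      Algebra.linearMap_apply, map_one] at this
    -- this : S (ι x) * ι x = 1
    have hφ : (FreeAlgebra.lift k fun _ : X => (Polynomial.X : Polynomial k))
        (S (FreeAlgebra.ι k x)) * Polynomial.X = 1 := by
      have h2 := congrArg (FreeAlgebra.lift k fun _ : X => (Polynomial.X : Polynomial k)) this
      simpa using h2
    exact Polynomial.not_isUnit_X (R := k)
      (IsUnit.of_mul_eq_one _ (by rw [mul_comm]; exact hφ))
  · rintro rfl
    refine ⟨freeAntipode k, ?_, ?_⟩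
    · apply (FreeAlgebra.basisFreeMonoid k X).ext
      intro w
      rw [basisFreeMonoid_eq]
      induction w using FreeMonoid.recOn with
      | one =>
          simp only [map_one, LinearMap.comp_apply, AlgHom.toLinearMap_apply, map_one,
            Algebra.TensorProduct.one_def, LinearMap.rTensor_tmul, LinearMap.mul'_apply,
            Algebra.linearMap_apply, freeAntipode_one, one_mul]
      | of_mul x w _ =>
          rw [map_mul, FreeMonoid.lift_eval_of]
          simp only [LinearMap.comp_apply, AlgHom.toLinearMap_apply, map_mul]
          rw [show (freeCoproduct k (∅ : Set X)) (FreeAlgebra.ι k x) =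
              FreeAlgebra.ι k x ⊗ₜ 1 + 1 ⊗ₜ FreeAlgebra.ι k x from by
            simp [freeCoproduct, if_neg (Set.notMem_empty x)]]
          rw [rTensor_step]
          rw [show (freeCounit k (∅ : Set X)) (FreeAlgebra.ι k x) = 0 from by
            simp [freeCounit, if_neg (Set.notMem_empty x)]]
          simp
    · apply (FreeAlgebra.basisFreeMonoid k X).ext
      intro w
      rw [basisFreeMonoid_eq, ← FreeMonoid.ofList_toList w]
      induction FreeMonoid.toList w using List.reverseRecOn with
      | nil =>
          simp only [show FreeMonoid.ofList ([] : List X) = 1 from rfl, map_one,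
            LinearMap.comp_apply, AlgHom.toLinearMap_apply, map_one,
            Algebra.TensorProduct.one_def, LinearMap.lTensor_tmul, LinearMap.mul'_apply,
            Algebra.linearMap_apply, freeAntipode_one, mul_one]
      | append_singleton l x _ =>
          rw [FreeMonoid.ofList_append, FreeMonoid.ofList_singleton, map_mul,
            FreeMonoid.lift_eval_of]
          simp only [LinearMap.comp_apply, AlgHom.toLinearMap_apply, map_mul]
          rw [show (freeCoproduct k (∅ : Set X)) (FreeAlgebra.ι k x) =
              FreeAlgebra.ι k x ⊗ₜ 1 + 1 ⊗ₜ FreeAlgebra.ι k x from by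
            simp [freeCoproduct, if_neg (Set.notMem_empty x)]]
          rw [lTensor_step]
          rw [show (freeCounit k (∅ : Set X)) (FreeAlgebra.ι k x) = 0 from by
            simp [freeCounit, if_neg (Set.notMem_empty x)]]
          simp
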